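/- Fix T > 1, let M = ⌈T·log₂ N⌉, and define r₀ by ∑_{l=1}^{r₀} C(M,l) < N. Then for every λ' with 1/T < λ' < 1 there is N₀ such that for all N ≥ N₀, H(r₀/M) ≤ λ'; in particular r₀/M is bounded above by a constant λ < 1/2 for large N. -/

import Mathlib

noncomputable def binEntropy2 (p : ℝ) : ℝ := -p * Real.logb 2 p - (1 - p) * Real.logb 2 (1 - p)

open Real Filter Finset

lemma binEntropy2_eq (p : ℝ) : binEntropy2 p = Real.binEntropy p / Real.log 2 := by
  simp [binEntropy2, Real.binEntropy, Real.logb, Real.log_inv]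
  ring

lemma binEntropy2_half : binEntropy2 (1/2 : ℝ) = 1 := by
  have h : Real.logb 2 ((1:ℝ)/2) = -1 := by
    rw [show (1/2:ℝ) = 2⁻¹ by norm_num, Real.logb_inv, Real.logb_self_eq_one (by norm_num)]
  norm_num [binEntropy2, h]


lemma choose_lower (M r : ℕ) (hM : 0 < M) (hr : r ≤ M) :
    (2:ℝ) ^ ((M:ℝ) * binEntropy2 ((r:ℝ)/(M:ℝ))) ≤ ((M:ℝ)+1) * (M.choose r : ℝ) := by
  have hM' : (0:ℝ) < M := by exact_mod_cast hM
  rcases Nat.eq_zero_or_pos r with hr0 | hr1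
  · subst hr0
    norm_num [binEntropy2]
  rcases eq_or_lt_of_le hr with hrM | hrM
  · subst hrM
    rw [div_self hM'.ne']
    norm_num [binEntropy2]
  set p : ℝ := (r:ℝ)/(M:ℝ) with hp
  have hp0 : 0 < p := div_pos (by exact_mod_cast hr1) hM'
  have hp1 : p < 1 := (div_lt_one hM').mpr (by exact_mod_cast hrM)
  have hq0 : 0 < 1 - p := by linarith
  have hMp : (M:ℝ) * p = r := by rw [hp]; field_simp [hM'.ne']
  set t : ℕ → ℝ := fun k => (M.choose k : ℝ) * (p ^ k * (1 - p) ^ (M - k)) with ht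
  have ht_nonneg : ∀ k, 0 ≤ t k := by
    intro k; apply mul_nonneg (Nat.cast_nonneg _); positivity
  have hstep : ∀ k, k < M →
      t (k+1) * (((k:ℝ)+1) * (1-p)) = t k * (((M:ℝ)-k) * p) := by
    intro k hk
    have hc : (M.choose (k+1) : ℝ) * ((k:ℝ)+1) = (M.choose k : ℝ) * ((M:ℝ) - k) := by
      have := Nat.choose_succ_right_eq M k
      have h2 : ((M.choose (k+1) * (k+1) : ℕ) : ℝ) = ((M.choose k * (M - k) : ℕ) : ℝ) := by
        exact_mod_cast congrArg Nat.cast this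
      push_cast [Nat.cast_sub hk.le] at h2
      linarith [h2]
    have hpow : (1-p) ^ (M - k) = (1-p) ^ (M - (k+1)) * (1-p) := by
      rw [← pow_succ]
      congr 1
      omega
    calc t (k+1) * (((k:ℝ)+1) * (1-p))
        = ((M.choose (k+1) : ℝ) * ((k:ℝ)+1)) * (p ^ (k+1) * ((1-p) ^ (M-(k+1)) * (1-p))) := by
          simp only [ht]; ring
      _ = ((M.choose k : ℝ) * ((M:ℝ)-k)) * (p ^ (k+1) * (1-p) ^ (M-k)) := by rw [hc, hpow]
      _ = t k * (((M:ℝ)-k) * p) := by simp only [ht, pow_succ]; ring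
  have hstep_up : ∀ k, k + 1 ≤ r → t k ≤ t (k+1) := by
    intro k hk
    have hkM : k < M := by omega
    have heq := hstep k hkM
    have hkr : (k:ℝ) + 1 ≤ r := by exact_mod_cast hk
    have hab : ((k:ℝ)+1) * (1-p) ≤ ((M:ℝ)-k) * p := by nlinarith
    have ha : (0:ℝ) < ((k:ℝ)+1) * (1-p) := by positivity
    have hb : (0:ℝ) < ((M:ℝ)-k) * p := lt_of_lt_of_le ha hab
    nlinarith [ht_nonneg (k+1), ht_nonneg k]
  have hstep_down : ∀ k, r ≤ k → k < M → t (k+1) ≤ t k := by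
    intro k hkr hkM
    have heq := hstep k hkM
    have hkr' : (r:ℝ) ≤ k := by exact_mod_cast hkr
    have hab : ((M:ℝ)-k) * p ≤ ((k:ℝ)+1) * (1-p) := by nlinarith
    have ha : (0:ℝ) < ((k:ℝ)+1) * (1-p) := by positivity
    nlinarith [ht_nonneg (k+1), ht_nonneg k]
  have hmax : ∀ k, k ≤ M → t k ≤ t r := by
    intro k hk
    rcases le_total k r with h | h
    · have aux : ∀ j, k ≤ j → (j ≤ r → t k ≤ t j) := by
        intro j hj
        induction j, hj using Nat.le_induction with
        | base => intro _; exact le_refl _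
        | succ n hn ih =>
          intro hnr
          exact (ih (by omega)).trans (hstep_up n hnr)
      exact aux r h le_rfl
    · have aux : ∀ j, r ≤ j → (j ≤ M → t j ≤ t r) := by
        intro j hj
        induction j, hj using Nat.le_induction with
        | base => intro _; exact le_refl _
        | succ n hn ih =>
          intro hnM
          exact (hstep_down n hn (by omega)).trans (ih (by omega))
      exact aux k h hk
  have hsum1 : ∑ k ∈ range (M+1), t k = 1 := by
    have h := add_pow p (1-p) M
    have h1 : p + (1-p) = 1 := by ring
    rw [h1, one_pow] at h
    rw [h]
    refine Finset.sum_congr rfl fun k _ => ?_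
    simp only [ht]; ring
  have hone : 1 ≤ ((M:ℝ)+1) * t r := by
    have h := Finset.sum_le_card_nsmul (range (M+1)) t (t r)
      (fun k hk => hmax k (by simpa [Nat.lt_succ_iff] using Finset.mem_range.mp hk))
    rw [hsum1, Finset.card_range, nsmul_eq_mul] at h
    push_cast at h
    linarith
  have h1 : p ^ r = (2:ℝ) ^ ((r:ℝ) * Real.logb 2 p) := by
    rw [mul_comm, Real.rpow_mul (by norm_num : (0:ℝ) ≤ 2),
      Real.rpow_logb two_pos (by norm_num) hp0, Real.rpow_natCast]
  have h2 : (1-p) ^ (M-r) = (2:ℝ) ^ (((M-r:ℕ):ℝ) * Real.logb 2 (1-p)) := by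
    rw [mul_comm, Real.rpow_mul (by norm_num : (0:ℝ) ≤ 2),
      Real.rpow_logb two_pos (by norm_num) hq0, Real.rpow_natCast]
  have hexp : (r:ℝ) * Real.logb 2 p + ((M-r:ℕ):ℝ) * Real.logb 2 (1-p)
      = -((M:ℝ) * binEntropy2 p) := by
    rw [Nat.cast_sub hr]
    simp only [binEntropy2]
    linear_combination (Real.logb 2 (1-p) - Real.logb 2 p) * hMp
  have hrpow : (2:ℝ) ^ ((M:ℝ) * binEntropy2 p) * (p ^ r * (1-p) ^ (M-r)) = 1 := by
    rw [h1, h2, ← Real.rpow_add two_pos, ← Real.rpow_add two_pos, hexp]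
    simp
  calc (2:ℝ) ^ ((M:ℝ) * binEntropy2 p)
      = (2:ℝ) ^ ((M:ℝ) * binEntropy2 p) * 1 := by ring
    _ ≤ (2:ℝ) ^ ((M:ℝ) * binEntropy2 p) * (((M:ℝ)+1) * t r) :=
        mul_le_mul_of_nonneg_left hone (Real.rpow_nonneg (by norm_num) _)
    _ = ((M:ℝ)+1) * (M.choose r : ℝ) * ((2:ℝ) ^ ((M:ℝ) * binEntropy2 p) * (p ^ r * (1-p) ^ (M-r))) := by
        simp only [ht]; ring
    _ = ((M:ℝ)+1) * (M.choose r : ℝ) := by rw [hrpow, mul_one]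

lemma half_aux (T : ℝ) (N M r₀ : ℕ) (hN2 : 2 ≤ N) (hM2 : 2 ≤ M)
    (hTlog : T * Real.logb 2 N ≤ M)
    (hE2 : ((M:ℝ)+1) * N ≤ (N:ℝ)^T)
    (hsum : ∑ l ∈ Finset.Icc 1 r₀, M.choose l < N) : 2 * r₀ < M := by
  by_contra hcon
  push_neg at hcon
  have hmem : M/2 ∈ Finset.Icc 1 r₀ := Finset.mem_Icc.mpr ⟨by omega, by omega⟩
  have hC : M.choose (M/2) ≤ ∑ l ∈ Finset.Icc 1 r₀, M.choose l :=
    Finset.single_le_sum (fun i _ => Nat.zero_le _) hmem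
  have hpow : 2^M ≤ (M+1) * M.choose (M/2) := by
    calc 2^M = ∑ i ∈ Finset.range (M+1), M.choose i := (Nat.sum_range_choose M).symm
      _ ≤ (M+1) * M.choose (M/2) := by
          have h := Finset.sum_le_card_nsmul (Finset.range (M+1)) (fun i => M.choose i)
            (M.choose (M/2)) (fun i _ => Nat.choose_le_middle i M)
          simpa [Finset.card_range, smul_eq_mul] using h
  have hN0 : (0:ℝ) < N := by exact_mod_cast (by omega : 0 < N)
  have hNT : (N:ℝ)^T ≤ (2:ℝ)^(M:ℝ) := by
    have h1 : (N:ℝ) = (2:ℝ) ^ Real.logb 2 (N:ℝ) :=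
      (Real.rpow_logb two_pos (by norm_num) hN0).symm
    calc (N:ℝ)^T = ((2:ℝ) ^ Real.logb 2 (N:ℝ))^T := by rw [← h1]
      _ = (2:ℝ) ^ (Real.logb 2 (N:ℝ) * T) := by rw [← Real.rpow_mul (by norm_num)]
      _ ≤ (2:ℝ) ^ (M:ℝ) :=
          Real.rpow_le_rpow_of_exponent_le one_le_two (by rw [mul_comm]; exact hTlog)
  have h2M : (2:ℝ)^(M:ℝ) = ((2^M : ℕ):ℝ) := by
    rw [Real.rpow_natCast]; push_cast; ring
  have hCN : (M.choose (M/2) : ℝ) < N := by exact_mod_cast lt_of_le_of_lt hC hsum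
  have hfin : (N:ℝ)^T < (N:ℝ)^T := by
    calc (N:ℝ)^T ≤ ((2^M:ℕ):ℝ) := h2M ▸ hNT
      _ ≤ (((M+1) * M.choose (M/2) : ℕ):ℝ) := by exact_mod_cast hpow
      _ < ((M:ℝ)+1) * N := by push_cast; nlinarith [hCN]
      _ ≤ (N:ℝ)^T := hE2
  exact lt_irrefl _ hfin


set_option maxHeartbeats 1000000 in
theorem entropy_ratio_bounded (T : ℝ) (hT : 1 < T) :
    (∀ lam' : ℝ, 1 / T < lam' → lam' < 1 →
      ∃ N₀ : ℕ, ∀ N : ℕ, N₀ ≤ N →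
        ∀ r₀ : ℕ,
          (∑ l ∈ Finset.Icc 1 r₀, (⌈T * Real.logb 2 N⌉₊).choose l < N) →
          binEntropy2 ((r₀ : ℝ) / (⌈T * Real.logb 2 N⌉₊ : ℝ)) ≤ lam') ∧
    (∃ lam : ℝ, lam < 1 / 2 ∧ ∃ N₁ : ℕ, ∀ N : ℕ, N₁ ≤ N →
      ∀ r₀ : ℕ,
        (∑ l ∈ Finset.Icc 1 r₀, (⌈T * Real.logb 2 N⌉₊).choose l < N) →
        (r₀ : ℝ) / (⌈T * Real.logb 2 N⌉₊ : ℝ) ≤ lam) := by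
  have hT0 : (0:ℝ) < T := by linarith
  have hinvT : 0 < 1/T := by positivity
  have hinvT1 : 1/T < 1 := by rw [div_lt_one hT0]; exact hT
  have hlog2 : 0 < Real.log 2 := Real.log_pos one_lt_two
  -- tendsto facts
  have htendlog : Tendsto (fun N : ℕ => Real.logb 2 (N:ℝ)) atTop atTop :=
    (Real.tendsto_logb_atTop (by norm_num : (1:ℝ) < 2)).comp tendsto_natCast_atTop_atTop
  have hlogle : ∀ N : ℕ, Real.logb 2 (N:ℝ) ≤ ((⌈T * Real.logb 2 (N:ℝ)⌉₊ : ℕ):ℝ) := by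
    intro N
    rcases le_or_gt (Real.logb 2 (N:ℝ)) 0 with h | h
    · exact h.trans (Nat.cast_nonneg _)
    · exact le_trans (by nlinarith) (Nat.le_ceil _)
  have htendM : Tendsto (fun N : ℕ => ((⌈T * Real.logb 2 (N:ℝ)⌉₊ : ℕ):ℝ)) atTop atTop :=
    tendsto_atTop_mono hlogle htendlog
  -- E2 : eventually (M+1)*N ≤ N^T
  have hx1 : ∀ᶠ x : ℝ in atTop, T * x + 2 ≤ (2:ℝ)^((T-1)*x) := by
    have hb : 0 < (T-1) * Real.log 2 := mul_pos (by linarith) hlog2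
    set b := (T-1) * Real.log 2 with hbdef
    filter_upwards [eventually_ge_atTop (1:ℝ), eventually_ge_atTop (4*(T+2)/b^2)]
      with x hxone hxbig
    have hx0 : (0:ℝ) < x := by linarith
    have hexp : (2:ℝ)^((T-1)*x) = Real.exp (b*x) := by
      rw [Real.rpow_def_of_pos two_pos]
      congr 1
      rw [hbdef]; ring
    have h2 : b*x/2 + 1 ≤ Real.exp (b*x/2) := Real.add_one_le_exp _
    have h3 : Real.exp (b*x) = Real.exp (b*x/2) * Real.exp (b*x/2) := by
      rw [← Real.exp_add]; ring_nf
    have hbx : 0 ≤ b*x/2 := by positivity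
    have h4 : (b*x/2)*(b*x/2) ≤ Real.exp (b*x/2) * Real.exp (b*x/2) :=
      mul_le_mul (by linarith) (by linarith) hbx (by positivity)
    have h5 : 4*(T+2) ≤ b^2 * x := by
      rw [div_le_iff₀ (by positivity)] at hxbig
      linarith
    rw [hexp, h3]
    nlinarith [h4, h5, hxone, hbx, hx0]
  have hE2ev : ∀ᶠ N : ℕ in atTop,
      (((⌈T * Real.logb 2 (N:ℝ)⌉₊ : ℕ):ℝ)+1) * N ≤ (N:ℝ)^T := by
    filter_upwards [htendlog.eventually hx1, eventually_ge_atTop 1] with N hx hN1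
    set x := Real.logb 2 (N:ℝ) with hxdef
    have hN0 : (0:ℝ) < N := by exact_mod_cast (by omega : 0 < N)
    have hN1' : (1:ℝ) ≤ N := by exact_mod_cast hN1
    have hx0 : 0 ≤ x := Real.logb_nonneg one_lt_two hN1'
    have hTx0 : 0 ≤ T * x := by positivity
    have hceil : ((⌈T*x⌉₊:ℕ):ℝ) ≤ T*x + 1 := le_of_lt (Nat.ceil_lt_add_one hTx0)
    have hNx : (N:ℝ) = (2:ℝ)^x := (Real.rpow_logb two_pos (by norm_num) hN0).symm
    have h1 : (N:ℝ)^(T-1) = (2:ℝ)^((T-1)*x) := by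
      rw [hNx, ← Real.rpow_mul (by norm_num), mul_comm x (T-1)]
    have h2 : (N:ℝ)^T = (N:ℝ)^(T-1) * N := by
      rw [show T = (T-1)+1 by ring, Real.rpow_add_one hN0.ne']
      ring_nf
    calc (((⌈T*x⌉₊:ℕ):ℝ)+1) * N ≤ (T*x + 2) * N := by nlinarith [hceil, hN0]
      _ ≤ (2:ℝ)^((T-1)*x) * N := mul_le_mul_of_nonneg_right hx hN0.le
      _ = (N:ℝ)^T := by rw [h2, h1]
  have hM2ev : ∀ᶠ N : ℕ in atTop, 2 ≤ ⌈T * Real.logb 2 (N:ℝ)⌉₊ :=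
    (htendM.eventually_ge_atTop 2).mono (fun N h => by exact_mod_cast h)
  -- part 1
  have part1 : ∀ lam' : ℝ, 1 / T < lam' → lam' < 1 →
      ∃ N₀ : ℕ, ∀ N : ℕ, N₀ ≤ N →
        ∀ r₀ : ℕ,
          (∑ l ∈ Finset.Icc 1 r₀, (⌈T * Real.logb 2 N⌉₊).choose l < N) →
          binEntropy2 ((r₀ : ℝ) / (⌈T * Real.logb 2 N⌉₊ : ℝ)) ≤ lam' := by
    intro lam' hl1 hl2
    have hεpos : 0 < lam' - 1/T := by linarith
    set ε := lam' - 1/T with hεdef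
    -- ε-condition eventually
    have hc : 0 < ε * Real.log 2 / 2 := by positivity
    set c := ε * Real.log 2 / 2 with hcdef
    have hlog_lin : ∀ᶠ x : ℝ in atTop, Real.log x ≤ c * x := by
      filter_upwards [Real.isLittleO_log_id_atTop.def hc, eventually_ge_atTop (0:ℝ)]
        with x hx hx0
      calc Real.log x ≤ |Real.log x| := le_abs_self _
        _ ≤ c * |x| := by simpa [Real.norm_eq_abs] using hx
        _ = c * x := by rw [abs_of_nonneg hx0]
    have hshift : ∀ᶠ x : ℝ in atTop, Real.log (x+1) ≤ c * (x+1) :=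
      (tendsto_atTop_add_const_right atTop 1 tendsto_id).eventually hlog_lin
    have hEεev : ∀ᶠ N : ℕ in atTop,
        Real.logb 2 (((⌈T * Real.logb 2 (N:ℝ)⌉₊ : ℕ):ℝ)+1)
          ≤ ε * ((⌈T * Real.logb 2 (N:ℝ)⌉₊ : ℕ):ℝ) := by
      filter_upwards [htendM.eventually hshift, htendM.eventually_ge_atTop 1] with N h1 h2
      set m : ℝ := ((⌈T * Real.logb 2 (N:ℝ)⌉₊ : ℕ):ℝ)
      calc Real.logb 2 (m+1) = Real.log (m+1) / Real.log 2 := rfl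
        _ ≤ (c * (m+1)) / Real.log 2 := by
            gcongr
        _ ≤ ε * m := by
            rw [div_le_iff₀ hlog2, hcdef]
            nlinarith [hεpos, hlog2, h2]
    obtain ⟨N₀, hN₀⟩ := eventually_atTop.mp
      ((hE2ev.and hM2ev).and (hEεev.and (eventually_ge_atTop 2)))
    refine ⟨N₀, ?_⟩
    intro N hN r₀ hsum
    obtain ⟨⟨hE2, hM2⟩, hEε, hN2⟩ := hN₀ N hN
    set M := ⌈T * Real.logb 2 (N:ℝ)⌉₊ with hMdef
    have hTlog : T * Real.logb 2 (N:ℝ) ≤ (M:ℝ) := Nat.le_ceil _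
    have h2r : 2 * r₀ < M := half_aux T N M r₀ hN2 hM2 hTlog hE2 hsum
    rcases Nat.eq_zero_or_pos r₀ with h0 | hr1
    · subst h0
      norm_num [binEntropy2]
      linarith
    · have hrM : r₀ ≤ M := by omega
      have hM0 : 0 < M := by omega
      have hM' : (0:ℝ) < M := by exact_mod_cast hM0
      have hCsum : M.choose r₀ ≤ ∑ l ∈ Finset.Icc 1 r₀, M.choose l :=
        Finset.single_le_sum (fun i _ => Nat.zero_le _) (Finset.mem_Icc.mpr ⟨hr1, le_rfl⟩)
      have hCN : (M.choose r₀ : ℝ) < N := by exact_mod_cast lt_of_le_of_lt hCsum hsum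
      have hNpos : (0:ℝ) < N := by exact_mod_cast (by omega : 0 < N)
      have hkey := choose_lower M r₀ hM0 hrM
      have hub : (2:ℝ)^((M:ℝ) * binEntropy2 ((r₀:ℝ)/(M:ℝ))) ≤ ((M:ℝ)+1) * N := by
        nlinarith [hkey, hCN, hM', (Nat.cast_nonneg (M.choose r₀) : (0:ℝ) ≤ _)]
      have hMH : (M:ℝ) * binEntropy2 ((r₀:ℝ)/(M:ℝ)) ≤ Real.logb 2 (((M:ℝ)+1) * N) := by
        calc (M:ℝ) * binEntropy2 ((r₀:ℝ)/(M:ℝ))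
            = Real.logb 2 ((2:ℝ)^((M:ℝ) * binEntropy2 ((r₀:ℝ)/(M:ℝ)))) :=
              (Real.logb_rpow two_pos (by norm_num)).symm
          _ ≤ Real.logb 2 (((M:ℝ)+1) * N) :=
              Real.logb_le_logb_of_le one_lt_two (Real.rpow_pos_of_pos two_pos _) hub
      have hsplit : Real.logb 2 (((M:ℝ)+1) * N)
          = Real.logb 2 ((M:ℝ)+1) + Real.logb 2 (N:ℝ) :=
        Real.logb_mul (by positivity) (by positivity)
      have hlogN : Real.logb 2 (N:ℝ) ≤ (M:ℝ)/T := by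
        rw [le_div_iff₀ hT0]
        nlinarith [hTlog]
      have hfinal : (M:ℝ) * binEntropy2 ((r₀:ℝ)/(M:ℝ)) ≤ (M:ℝ) * lam' := by
        rw [hsplit] at hMH
        have h2 : Real.logb 2 (N:ℝ) ≤ (M:ℝ) * (1/T) := by
          rw [show (M:ℝ) * (1/T) = (M:ℝ)/T by ring]
          exact hlogN
        have h1 : Real.logb 2 ((M:ℝ)+1) ≤ (lam' - 1/T) * (M:ℝ) := hEε
        linarith [h1, h2, hMH]
      exact le_of_mul_le_mul_left hfinal hM'
  refine ⟨part1, ?_⟩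
  -- part 2
  set lam' := (1/T + 1)/2 with hl'
  have hl1 : 1/T < lam' := by rw [hl']; linarith
  have hl2 : lam' < 1 := by rw [hl']; linarith
  obtain ⟨N₀, hN₀⟩ := part1 lam' hl1 hl2
  have hcont : Continuous binEntropy2 := by
    have h : binEntropy2 = fun p => Real.binEntropy p / Real.log 2 := by
      funext p; exact binEntropy2_eq p
    rw [h]
    exact Real.binEntropy_continuous.div_const _
  have hev : ∀ᶠ x in nhdsWithin (1/2:ℝ) (Set.Iio (1/2:ℝ)),
      lam' < binEntropy2 x ∧ 0 < x ∧ x < 1/2 := by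
    have h1 : ∀ᶠ x in nhds (1/2:ℝ), lam' < binEntropy2 x := by
      have hca := hcont.continuousAt (x := (1/2:ℝ))
      have h2 : ∀ᶠ y in nhds (binEntropy2 (1/2:ℝ)), lam' < y :=
        eventually_gt_nhds (by rw [binEntropy2_half]; exact hl2)
      exact hca.eventually h2
    have h3 : ∀ᶠ x in nhds (1/2:ℝ), (0:ℝ) < x := eventually_gt_nhds (by norm_num)
    filter_upwards [nhdsWithin_le_nhds h1, nhdsWithin_le_nhds h3, self_mem_nhdsWithin]
      with x ha hb hc
    exact ⟨ha, hb, hc⟩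
  obtain ⟨lam, hlamlt, hlam0, hlamhalf⟩ := hev.exists
  refine ⟨lam, hlamhalf, ?_⟩
  obtain ⟨N₁', hN₁'⟩ := eventually_atTop.mp
    ((hE2ev.and hM2ev).and (eventually_ge_atTop 2))
  refine ⟨max N₀ N₁', ?_⟩
  intro N hN r₀ hsum
  have hH := hN₀ N (le_trans (le_max_left _ _) hN) r₀ hsum
  obtain ⟨⟨hE2, hM2⟩, hN2⟩ := hN₁' N (le_trans (le_max_right _ _) hN)
  set M := ⌈T * Real.logb 2 (N:ℝ)⌉₊ with hMdef
  have h2r : 2 * r₀ < M := half_aux T N M r₀ hN2 hM2 (Nat.le_ceil _) hE2 hsum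
  have hM' : (0:ℝ) < M := by exact_mod_cast (by omega : 0 < M)
  have hr₀M : (r₀:ℝ) < (M:ℝ)/2 := by
    rw [lt_div_iff₀ (by norm_num : (0:ℝ) < 2)]
    exact_mod_cast (by omega : r₀ * 2 < M)
  have hphalf : (r₀:ℝ)/(M:ℝ) < 1/2 := by
    rw [div_lt_iff₀ hM']
    linarith
  by_contra hcon
  push_neg at hcon
  set p := (r₀:ℝ)/(M:ℝ) with hpdef
  have hp_mem : p ∈ Set.Icc (0:ℝ) 2⁻¹ := ⟨by positivity, by rw [show (2⁻¹:ℝ) = 1/2 by norm_num]; linarith⟩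
  have hlam_mem : lam ∈ Set.Icc (0:ℝ) 2⁻¹ :=
    ⟨hlam0.le, by rw [show (2⁻¹:ℝ) = 1/2 by norm_num]; linarith⟩
  have hmono := Real.binEntropy_strictMonoOn hlam_mem hp_mem hcon
  have hlt : binEntropy2 lam < binEntropy2 p := by
    rw [binEntropy2_eq, binEntropy2_eq]
    gcongr
  linarith [hH, hlamlt, hlt]
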